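/- Let 𝔬_ℓ be a finite quotient of a complete discrete valuation ring and let ξ̃ = j(ξ̃₁, ξ̃₂) = diag(ξ̃₁, ξ̃₂) ∈ gl_d(𝔬_ℓ) be block diagonal, where the reductions of ξ̃₁ ∈ Mat_{d₁}(𝔬_ℓ) and ξ̃₂ ∈ Mat_{d₂}(𝔬_ℓ) modulo the maximal ideal have coprime characteristic polynomials. Then the centralizer of ξ̃ in GL_d(𝔬_ℓ) is contained in the block-diagonal subgroup GL_{d₁}(𝔬_ℓ) × GL_{d₂}(𝔬_ℓ), and equals the product of the centralizers: C_{GL_d(𝔬_ℓ)}(ξ̃) ≅ C_{GL_{d₁}(𝔬_ℓ)}(ξ̃₁) × C_{GL_{d₂}(𝔬_ℓ)}(ξ̃₂). -/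

import Mathlib

open Matrix Polynomial

section Aux

variable {R S : Type*} [CommRing R] [CommRing S]

/-- mapping a matrix along a ring hom commutes with `aeval`. -/
lemma aux_map_aeval {n : ℕ} (f : R →+* S) (M : Matrix (Fin n) (Fin n) R) (p : R[X]) :
    (Polynomial.aeval M p).map f = Polynomial.aeval (M.map f) (p.map f) := by
  have h1 : (Polynomial.aeval M p).map f
      = f.mapMatrix (Polynomial.aeval M p) := rfl
  rw [h1, Polynomial.aeval_def, Polynomial.hom_eval₂, Polynomial.aeval_def,
    Polynomial.eval₂_map]
  congr 1
  ext a
  simp [Matrix.algebraMap_eq_diagonal, Matrix.diagonal_apply, apply_ite f]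

/-- intertwining extends to polynomials. -/
lemma aux_intertwine {m n : ℕ} (A : Matrix (Fin m) (Fin m) R)
    (B : Matrix (Fin n) (Fin n) R) (V : Matrix (Fin m) (Fin n) R)
    (hV : V * B = A * V) (p : R[X]) :
    V * Polynomial.aeval B p = Polynomial.aeval A p * V := by
  have hpow : ∀ k : ℕ, V * B ^ k = A ^ k * V := by
    intro k
    induction k with
    | zero => simp
    | succ k ih =>
        rw [pow_succ, pow_succ, ← Matrix.mul_assoc, ih, Matrix.mul_assoc, hV,
          ← Matrix.mul_assoc]
  induction p using Polynomial.induction_on' with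
  | add p q hp hq => rw [map_add, map_add, Matrix.mul_add, Matrix.add_mul, hp, hq]
  | monomial k a =>
      rw [Polynomial.aeval_monomial, Polynomial.aeval_monomial, ← Algebra.smul_def,
        ← Algebra.smul_def, Matrix.mul_smul, Matrix.smul_mul, hpow]

end Aux

theorem centralizer_of_block_diagonal
    (O : Type*) [CommRing O] [IsDomain O] [IsDiscreteValuationRing O]
    [Finite (IsLocalRing.ResidueField O)]
    (ℓ : ℕ) (hℓ : 1 ≤ ℓ)
    (R : Type*) [CommRing R] (q : O →+* R) (hq : Function.Surjective q)
    (hker : RingHom.ker q = IsLocalRing.maximalIdeal O ^ ℓ)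
    (r : R →+* O ⧸ IsLocalRing.maximalIdeal O)
    (hr : r.comp q = Ideal.Quotient.mk (IsLocalRing.maximalIdeal O))
    (d₁ d₂ : ℕ)
    (ξ₁ : Matrix (Fin d₁) (Fin d₁) R) (ξ₂ : Matrix (Fin d₂) (Fin d₂) R)
    (hcop : IsCoprime ((ξ₁.map r).charpoly) ((ξ₂.map r).charpoly))
    (ξ : Matrix (Fin d₁ ⊕ Fin d₂) (Fin d₁ ⊕ Fin d₂) R)
    (hξ : ξ = Matrix.fromBlocks ξ₁ 0 0 ξ₂) :
    (∀ u : (Matrix (Fin d₁ ⊕ Fin d₂) (Fin d₁ ⊕ Fin d₂) R)ˣ,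
      (u : Matrix (Fin d₁ ⊕ Fin d₂) (Fin d₁ ⊕ Fin d₂) R) * ξ = ξ * u →
        (u : Matrix (Fin d₁ ⊕ Fin d₂) (Fin d₁ ⊕ Fin d₂) R).toBlocks₁₂ = 0 ∧
        (u : Matrix (Fin d₁ ⊕ Fin d₂) (Fin d₁ ⊕ Fin d₂) R).toBlocks₂₁ = 0 ∧
        IsUnit (u : Matrix (Fin d₁ ⊕ Fin d₂) (Fin d₁ ⊕ Fin d₂) R).toBlocks₁₁ ∧
        IsUnit (u : Matrix (Fin d₁ ⊕ Fin d₂) (Fin d₁ ⊕ Fin d₂) R).toBlocks₂₂ ∧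
        (u : Matrix (Fin d₁ ⊕ Fin d₂) (Fin d₁ ⊕ Fin d₂) R).toBlocks₁₁ * ξ₁ =
          ξ₁ * (u : Matrix (Fin d₁ ⊕ Fin d₂) (Fin d₁ ⊕ Fin d₂) R).toBlocks₁₁ ∧
        (u : Matrix (Fin d₁ ⊕ Fin d₂) (Fin d₁ ⊕ Fin d₂) R).toBlocks₂₂ * ξ₂ =
          ξ₂ * (u : Matrix (Fin d₁ ⊕ Fin d₂) (Fin d₁ ⊕ Fin d₂) R).toBlocks₂₂) ∧
    (∀ (u₁ : Matrix (Fin d₁) (Fin d₁) R) (u₂ : Matrix (Fin d₂) (Fin d₂) R),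
      IsUnit u₁ → IsUnit u₂ → u₁ * ξ₁ = ξ₁ * u₁ → u₂ * ξ₂ = ξ₂ * u₂ →
        IsUnit (Matrix.fromBlocks u₁ 0 0 u₂) ∧
        Matrix.fromBlocks u₁ 0 0 u₂ * ξ = ξ * Matrix.fromBlocks u₁ 0 0 u₂) := by
  -- residue field notation
  set k := O ⧸ IsLocalRing.maximalIdeal O
  -- a unit lift : if r x is a unit then x is a unit
  have hunit : ∀ x : R, IsUnit (r x) → IsUnit x := by
    intro x hx
    obtain ⟨y, rfl⟩ := hq x
    have hxy : r (q y) = Ideal.Quotient.mk (IsLocalRing.maximalIdeal O) y := by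
      rw [← hr]; rfl
    rw [hxy] at hx
    have hy : y ∉ IsLocalRing.maximalIdeal O := by
      intro hm
      rw [Ideal.Quotient.eq_zero_iff_mem.mpr hm] at hx
      exact hx.ne_zero rfl
    have : IsUnit y := by
      by_contra h
      exact hy (IsLocalRing.mem_maximalIdeal y |>.mpr h)
    exact this.map q
  -- lift matrix units
  have hmunit : ∀ (n : ℕ) (M : Matrix (Fin n) (Fin n) R),
      IsUnit (M.map r) → IsUnit M := by
    intro n M hM
    rw [Matrix.isUnit_iff_isUnit_det] at hM ⊢
    rw [← RingHom.mapMatrix_apply, ← RingHom.map_det] at hM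
    exact hunit _ hM
  -- units of evaluated coprime charpolys
  have key : ∀ (m n : ℕ) (A : Matrix (Fin m) (Fin m) R)
      (B : Matrix (Fin n) (Fin n) R)
      (hAB : IsCoprime ((A.map r).charpoly) ((B.map r).charpoly))
      (V : Matrix (Fin m) (Fin n) R), V * B = A * V → V = 0 := by
    intro m n A B hAB V hV
    -- aeval B (charpoly A) is a unit
    have hu : IsUnit (Polynomial.aeval B A.charpoly) := by
      apply hmunit
      rw [aux_map_aeval, ← Matrix.charpoly_map]
      obtain ⟨a, b, hab⟩ := hAB
      have h1 : Polynomial.aeval (B.map r) (a * (A.map r).charpoly)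
          + Polynomial.aeval (B.map r) (b * (B.map r).charpoly) = 1 := by
        rw [← map_add, hab, _root_.map_one]
      rw [_root_.map_mul, _root_.map_mul, Matrix.aeval_self_charpoly, Matrix.mul_zero, add_zero,
        ← _root_.map_mul] at h1
      refine ⟨⟨Polynomial.aeval (B.map r) ((A.map r).charpoly),
        Polynomial.aeval (B.map r) a, ?_, ?_⟩, rfl⟩
      · rw [← _root_.map_mul, mul_comm, h1]
      · rw [← _root_.map_mul, ← h1, _root_.map_mul]
    have h0 : V * Polynomial.aeval B A.charpoly = 0 := by
      rw [aux_intertwine A B V hV, Matrix.aeval_self_charpoly, Matrix.zero_mul]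
    obtain ⟨w, hw⟩ := hu
    calc V = V * (Polynomial.aeval B A.charpoly * (↑w⁻¹ : Matrix (Fin n) (Fin n) R)) := by
            rw [← hw, Units.mul_inv, Matrix.mul_one]
      _ = V * Polynomial.aeval B A.charpoly * (↑w⁻¹ : Matrix (Fin n) (Fin n) R) := by rw [Matrix.mul_assoc]
      _ = 0 := by rw [h0, Matrix.zero_mul]
  subst hξ
  constructor
  · intro u hu
    set M : Matrix (Fin d₁ ⊕ Fin d₂) (Fin d₁ ⊕ Fin d₂) R := (u : Matrix (Fin d₁ ⊕ Fin d₂) (Fin d₁ ⊕ Fin d₂) R) with hM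
    have hblocks : M = Matrix.fromBlocks M.toBlocks₁₁ M.toBlocks₁₂ M.toBlocks₂₁ M.toBlocks₂₂ :=
      (Matrix.fromBlocks_toBlocks M).symm
    have hmul : Matrix.fromBlocks (M.toBlocks₁₁ * ξ₁) (M.toBlocks₁₂ * ξ₂)
        (M.toBlocks₂₁ * ξ₁) (M.toBlocks₂₂ * ξ₂)
        = Matrix.fromBlocks (ξ₁ * M.toBlocks₁₁) (ξ₁ * M.toBlocks₁₂)
          (ξ₂ * M.toBlocks₂₁) (ξ₂ * M.toBlocks₂₂) := by
      have := hu
      rw [hblocks] at this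
      simpa [Matrix.fromBlocks_multiply] using this
    have h11 : M.toBlocks₁₁ * ξ₁ = ξ₁ * M.toBlocks₁₁ := by
      have := congrArg Matrix.toBlocks₁₁ hmul
      simpa [Matrix.toBlocks_fromBlocks₁₁] using this
    have h22 : M.toBlocks₂₂ * ξ₂ = ξ₂ * M.toBlocks₂₂ := by
      have := congrArg Matrix.toBlocks₂₂ hmul
      simpa [Matrix.toBlocks_fromBlocks₂₂] using this
    have h12 : M.toBlocks₁₂ = 0 := by
      apply key d₁ d₂ ξ₁ ξ₂ hcop
      have := congrArg Matrix.toBlocks₁₂ hmul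
      simpa [Matrix.toBlocks_fromBlocks₁₂] using this
    have h21 : M.toBlocks₂₁ = 0 := by
      apply key d₂ d₁ ξ₂ ξ₁ hcop.symm
      have := congrArg Matrix.toBlocks₂₁ hmul
      simpa [Matrix.toBlocks_fromBlocks₂₁] using this
    have hMunit : IsUnit M := u.isUnit
    have hdet : IsUnit M.det := (Matrix.isUnit_iff_isUnit_det M).mp hMunit
    have hdetblocks : M.det = M.toBlocks₁₁.det * M.toBlocks₂₂.det := by
      conv_lhs => rw [hblocks, h12, h21]
      rw [Matrix.det_fromBlocks_zero₂₁]
    rw [hdetblocks] at hdet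
    refine ⟨h12, h21, ?_, ?_, h11, h22⟩
    · exact (Matrix.isUnit_iff_isUnit_det _).mpr (isUnit_of_mul_isUnit_left hdet)
    · exact (Matrix.isUnit_iff_isUnit_det _).mpr (isUnit_of_mul_isUnit_right hdet)
  · intro u₁ u₂ hu₁ hu₂ hc₁ hc₂
    constructor
    · rw [Matrix.isUnit_iff_isUnit_det, Matrix.det_fromBlocks_zero₂₁]
      exact ((Matrix.isUnit_iff_isUnit_det _).mp hu₁).mul
        ((Matrix.isUnit_iff_isUnit_det _).mp hu₂)
    · simp [Matrix.fromBlocks_multiply, hc₁, hc₂]
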